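/- Let M be an m×m nonnegative real matrix in block upper-triangular form M = [[A, B],[0, C]], where A is d×d with 1 ≤ d < m. Suppose there is a strictly positive row vector (ω_L, v) ∈ ℝ^d × ℝ^{m−d} and a real number λ > 0 with (ω_L, v)·M = λ·(ω_L, v), and suppose there is M₀ ∈ ℕ such that for every n ≥ M₀ the upper-right d×(m−d) block of Mⁿ is strictly positive. Then the spectral radius of C is strictly less than λ. -/

import Mathlib

/- Statement 2: For a nonnegative block upper-triangular matrix M = [[A,B],[0,C]] with a
strictly positive left eigenvector for an eigenvalue λ > 0, and whose upper-right block of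
Mⁿ is eventually strictly positive, the spectral radius of C is strictly less than λ,
i.e. every complex eigenvalue of C has modulus < λ. -/

open Matrix
open Polynomial Finset

theorem spectralRadius_lower_block_lt
    (d e : ℕ) (hd : 0 < d) (he : 0 < e)
    (M : Matrix (Fin d ⊕ Fin e) (Fin d ⊕ Fin e) ℝ)
    (hMnonneg : ∀ i j, 0 ≤ M i j)
    (hblock : ∀ (i : Fin e) (j : Fin d), M (Sum.inr i) (Sum.inl j) = 0)
    (w : Fin d ⊕ Fin e → ℝ) (hw : ∀ i, 0 < w i)
    (lam : ℝ) (hlam : 0 < lam)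
    (heig : w ᵥ* M = lam • w)
    (M₀ : ℕ) (hpos : ∀ n ≥ M₀, ∀ (i : Fin d) (j : Fin e), 0 < (M ^ n) (Sum.inl i) (Sum.inr j)) :
    ∀ μ : ℂ, ((M.submatrix Sum.inr Sum.inr).map (Complex.ofReal : ℝ → ℂ)).charpoly.IsRoot μ →
      ‖μ‖ < lam := by
  intro μ hroot
  set C : Matrix (Fin e) (Fin e) ℝ := M.submatrix Sum.inr Sum.inr with hC
  set C' : Matrix (Fin e) (Fin e) ℂ := C.map (Complex.ofReal : ℝ → ℂ) with hC'
  -- eigenvector of C'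
  have hdet : (μ • (1 : Matrix (Fin e) (Fin e) ℂ) - C').det = 0 := by
    have := hroot
    unfold Matrix.charpoly at this
    rw [Polynomial.IsRoot, ← Polynomial.coe_evalRingHom, RingHom.map_det] at this
    rw [RingHom.mapMatrix_apply] at this
    convert this using 2
    ext i j
    by_cases hij : i = j <;>
      simp [hij, charmatrix_apply_eq, charmatrix_apply_ne, Matrix.one_apply, Matrix.smul_apply]
  obtain ⟨u, hu, h2⟩ := (Matrix.exists_mulVec_eq_zero_iff).2 hdet
  have heigu : C' *ᵥ u = μ • u := by
    rw [Matrix.sub_mulVec, sub_eq_zero, Matrix.smul_mulVec, Matrix.one_mulVec] at h2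
    exact h2.symm
  -- nonnegativity of powers
  have hpownn : ∀ n : ℕ, ∀ i j, 0 ≤ (M ^ n) i j := by
    intro n
    induction n with
    | zero => intro i j; by_cases hij : i = j <;> simp [pow_zero, Matrix.one_apply, hij]
    | succ n ih =>
        intro i j
        rw [pow_succ, Matrix.mul_apply]
        exact Finset.sum_nonneg fun k _ => mul_nonneg (ih i k) (hMnonneg k j)
  -- block structure of powers
  have hblockpow : ∀ n : ℕ, (∀ k i, (M ^ n) (Sum.inr k) (Sum.inl i) = 0) ∧
      (∀ k j, (M ^ n) (Sum.inr k) (Sum.inr j) = (C ^ n) k j) := by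
    intro n
    induction n with
    | zero =>
        constructor
        · intro k i; simp [pow_zero, Matrix.one_apply]
        · intro k j; by_cases hkj : k = j <;> simp [pow_zero, Matrix.one_apply, hkj]
    | succ n ih =>
        obtain ⟨ih1, ih2⟩ := ih
        constructor
        · intro k i
          rw [pow_succ, Matrix.mul_apply, Fintype.sum_sum_type]
          rw [Finset.sum_eq_zero fun x _ => by rw [ih1 k x, zero_mul],
              Finset.sum_eq_zero fun x _ => by rw [hblock x i, mul_zero], add_zero]
        · intro k j
          rw [pow_succ, Matrix.mul_apply, Fintype.sum_sum_type, pow_succ, Matrix.mul_apply]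
          rw [Finset.sum_eq_zero fun x _ => by rw [ih1 k x, zero_mul], zero_add]
          exact Finset.sum_congr rfl fun x _ => by rw [ih2 k x]; rfl
  -- left eigenvector of powers
  have heign : ∀ n : ℕ, w ᵥ* (M ^ n) = (lam ^ n) • w := by
    intro n
    induction n with
    | zero => simp
    | succ n ih =>
        rw [pow_succ, ← Matrix.vecMul_vecMul, ih, Matrix.smul_vecMul, heig, smul_smul, ← pow_succ]
  -- key strict inequality for columns of C^M₀
  set n := M₀ with hn
  have hkey : ∀ j : Fin e, ∑ k, w (Sum.inr k) * (C ^ n) k j < lam ^ n * w (Sum.inr j) := by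
    intro j
    have h1 : (w ᵥ* (M ^ n)) (Sum.inr j) = lam ^ n * w (Sum.inr j) := by
      rw [heign n]; rfl
    rw [Matrix.vecMul, dotProduct, Fintype.sum_sum_type] at h1
    have hsum2 : ∑ k, w (Sum.inr k) * (M ^ n) (Sum.inr k) (Sum.inr j)
        = ∑ k, w (Sum.inr k) * (C ^ n) k j :=
      Finset.sum_congr rfl fun k _ => by rw [(hblockpow n).2 k j]
    have hsum1 : 0 < ∑ i : Fin d, w (Sum.inl i) * (M ^ n) (Sum.inl i) (Sum.inr j) := by
      have : Nonempty (Fin d) := ⟨⟨0, hd⟩⟩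
      apply Finset.sum_pos
      · intro i _
        exact mul_pos (hw _) (hpos n le_rfl i j)
      · exact Finset.univ_nonempty
    rw [hsum2] at h1
    linarith
  -- |μ|^n * |u j| ≤ ∑ k (C^n) j k * |u k|
  have heigun : (C' ^ n) *ᵥ u = (μ ^ n) • u := by
    induction n with
    | zero => simp
    | succ m ih =>
        rw [pow_succ, ← Matrix.mulVec_mulVec, heigu, Matrix.mulVec_smul, ih, smul_smul, ← pow_succ']
  have hCmap : C' ^ n = (C ^ n).map (Complex.ofReal : ℝ → ℂ) := by
    rw [hC']
    exact (RingHom.mapMatrix (algebraMap ℝ ℂ)).map_pow C n |>.symm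
  have habs : ∀ j, (‖μ‖) ^ n * ‖u j‖
      ≤ ∑ k, (C ^ n) j k * ‖u k‖ := by
    intro j
    have h1 : ((C' ^ n) *ᵥ u) j = μ ^ n * u j := by rw [heigun]; rfl
    calc (‖μ‖) ^ n * ‖u j‖
        = ‖μ ^ n * u j‖ := by rw [norm_mul, norm_pow]
      _ = ‖∑ k, (C' ^ n) j k * u k‖ := by rw [← h1, Matrix.mulVec, dotProduct]
      _ ≤ ∑ k, ‖(C' ^ n) j k * u k‖ := norm_sum_le _ _
      _ = ∑ k, (C ^ n) j k * ‖u k‖ := by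
          apply Finset.sum_congr rfl
          intro k _
          have hCnn : 0 ≤ (C ^ n) j k := by
            rw [← (hblockpow n).2 j k]; exact hpownn n _ _
          rw [hCmap, Matrix.map_apply, norm_mul, Complex.norm_real, Real.norm_of_nonneg hCnn]
  -- sum up against v
  obtain ⟨k₀, hk₀⟩ : ∃ k, u k ≠ 0 := Function.ne_iff.mp hu
  have hS : 0 < ∑ k, w (Sum.inr k) * ‖u k‖ := by
    apply Finset.sum_pos'
    · intro k _
      exact mul_nonneg (hw _).le (norm_nonneg _)
    · exact ⟨k₀, Finset.mem_univ _, mul_pos (hw _) (by simpa using hk₀)⟩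
  have hmain : (‖μ‖) ^ n * ∑ k, w (Sum.inr k) * ‖u k‖
      < lam ^ n * ∑ k, w (Sum.inr k) * ‖u k‖ := by
    calc (‖μ‖) ^ n * ∑ k, w (Sum.inr k) * ‖u k‖
        = ∑ j, w (Sum.inr j) * ((‖μ‖) ^ n * ‖u j‖) := by
          rw [Finset.mul_sum]; apply Finset.sum_congr rfl; intro j _; ring
      _ ≤ ∑ j, w (Sum.inr j) * ∑ k, (C ^ n) j k * ‖u k‖ := by
          apply Finset.sum_le_sum
          intro j _
          exact mul_le_mul_of_nonneg_left (habs j) (hw _).le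
      _ = ∑ k, (∑ j, w (Sum.inr j) * (C ^ n) j k) * ‖u k‖ := by
          simp_rw [Finset.mul_sum, Finset.sum_mul]
          rw [Finset.sum_comm]
          exact Finset.sum_congr rfl fun k _ => Finset.sum_congr rfl fun j _ => by ring
      _ < ∑ k, (lam ^ n * w (Sum.inr k)) * ‖u k‖ := by
          apply Finset.sum_lt_sum
          · intro k _
            exact mul_le_mul_of_nonneg_right (hkey k).le (norm_nonneg _)
          · exact ⟨k₀, Finset.mem_univ _,
              mul_lt_mul_of_pos_right (hkey k₀) (by simpa using hk₀)⟩
      _ = lam ^ n * ∑ k, w (Sum.inr k) * ‖u k‖ := by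
          rw [Finset.mul_sum]; apply Finset.sum_congr rfl; intro k _; ring
  have hpowlt : (‖μ‖) ^ n < lam ^ n := lt_of_mul_lt_mul_right hmain hS.le
  by_contra hge
  push_neg at hge
  exact absurd hpowlt (not_lt.mpr (pow_le_pow_left₀ hlam.le hge n))
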